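/- Let α and β be types and let φ : FreeGroup α →* FreeGroup β be a group homomorphism. Suppose w ∈ FreeGroup α satisfies φ(w) = 1, w ≠ 1, and w has minimal length in the kernel: FreeGroup.norm w ≤ FreeGroup.norm v for every v ≠ 1 with φ(v) = 1. Let ℓ = FreeGroup.toWord w be the reduced word of w and k = ℓ.length. Then for all natural numbers p < q ≤ k with ¬(p = 0 ∧ q = k), the images φ(FreeGroup.mk (ℓ.take p)) and φ(FreeGroup.mk (ℓ.take q)) are distinct elements of FreeGroup β. -/

import Mathlib

/-- The proper prefixes of a minimal-length nontrivial element of the kernel of a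
homomorphism of free groups have pairwise distinct images. -/
theorem prefixes_of_minimal_kernel_element_distinct {α β : Type*} [DecidableEq α]
    (φ : FreeGroup α →* FreeGroup β) (w : FreeGroup α)
    (hker : φ w = 1) (hw : w ≠ 1)
    (hmin : ∀ v : FreeGroup α, v ≠ 1 → φ v = 1 → FreeGroup.norm w ≤ FreeGroup.norm v)
    (p q : ℕ) (hpq : p < q) (hq : q ≤ (FreeGroup.toWord w).length)
    (hne : ¬(p = 0 ∧ q = (FreeGroup.toWord w).length)) :
    φ (FreeGroup.mk ((FreeGroup.toWord w).take p)) ≠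
      φ (FreeGroup.mk ((FreeGroup.toWord w).take q)) := by
  intro h
  set ℓ := FreeGroup.toWord w with hℓ
  set k := ℓ.length with hk
  have hnormw : FreeGroup.norm w = k := rfl
  -- middle segment
  set v : FreeGroup α := FreeGroup.mk ((ℓ.take q).drop p) with hv
  have hsplit : FreeGroup.mk (ℓ.take p) * v = FreeGroup.mk (ℓ.take q) := by
    have heq : ℓ.take p ++ (ℓ.take q).drop p = ℓ.take q := by
      conv_rhs => rw [← List.take_append_drop p (ℓ.take q)]
      rw [List.take_take, min_eq_left hpq.le]
    rw [hv, FreeGroup.mul_mk, heq]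
  have hφv : φ v = 1 := by
    have := congrArg (fun x => (φ (FreeGroup.mk (ℓ.take p)))⁻¹ * x) (congrArg φ hsplit)
    simpa [map_mul, ← h] using this
  have hseglen : ((ℓ.take q).drop p).length = q - p := by
    simp [List.length_drop, List.length_take, min_eq_left hq] <;> omega
  by_cases hv1 : v = 1
  · -- then prefixes equal; w equals shorter word
    rw [hv1, mul_one] at hsplit
    have hw' : w = FreeGroup.mk (ℓ.take p ++ ℓ.drop q) := by
      conv_lhs => rw [← FreeGroup.mk_toWord (x := w), ← hℓ,
        ← List.take_append_drop q ℓ]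
      rw [← FreeGroup.mul_mk, ← hsplit, FreeGroup.mul_mk]
    have hle : FreeGroup.norm w ≤ p + (k - q) := by
      calc FreeGroup.norm w ≤ (ℓ.take p ++ ℓ.drop q).length := by
            rw [hw']; exact FreeGroup.norm_mk_le
        _ ≤ p + (k - q) := by
            simp [List.length_take, List.length_drop] <;> omega
    omega
  · have h1 := hmin v hv1 hφv
    have h2 : FreeGroup.norm v ≤ q - p := hseglen ▸ FreeGroup.norm_mk_le
    omega
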